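/- Define the iterated logarithm by log_1(x) = ln x and log_{i+1}(x) = ln(log_i(x)), and Tower(0)=1, Tower(i+1) = e^{Tower(i)}. Fix k ≥ 1 and a real n ≥ Tower(k+1). Then ∑_{i=0}^{k-1} 1/log_{i+1}(n) < 1. -/

import Mathlib

noncomputable def Tower : ℕ → ℝ
  | 0 => 1
  | i + 1 => Real.exp (Tower i)

noncomputable def iterLog : ℕ → ℝ → ℝ
  | 0 => id
  | i + 1 => fun x => Real.log (iterLog i x)

lemma Tower_pos (j : ℕ) : 0 < Tower j := by
  induction j with
  | zero => norm_num [Tower]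
  | succ j ih => exact Real.exp_pos _

lemma two_pow_le_Tower (j : ℕ) : (2:ℝ)^j ≤ Tower j := by
  induction j with
  | zero => norm_num [Tower]
  | succ j ih =>
    have h1 : (2:ℝ)^(j+1) ≤ Real.exp ((2:ℝ)^j) := by
      calc (2:ℝ)^(j+1) ≤ 2^(2^j) := by
            apply pow_le_pow_right₀ (by norm_num)
            exact Nat.lt_two_pow_self
        _ = Real.exp ((2^j : ℕ) * Real.log 2) := by
            rw [Real.exp_nat_mul, Real.exp_log (show (0:ℝ) < 2 by norm_num)]
        _ ≤ Real.exp ((2:ℝ)^j) := by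
            apply Real.exp_le_exp.mpr
            push_cast
            nlinarith [Real.log_le_sub_one_of_pos (show (0:ℝ) < 2 by norm_num),
              pow_pos (show (0:ℝ) < 2 by norm_num) j]
    calc (2:ℝ)^(j+1) ≤ Real.exp ((2:ℝ)^j) := h1
      _ ≤ Real.exp (Tower j) := Real.exp_le_exp.mpr ih
      _ = Tower (j+1) := rfl

lemma iterLog_ge (k : ℕ) (n : ℝ) (hn : Tower (k + 1) ≤ n) :
    ∀ i, i ≤ k → Tower (k + 1 - i) ≤ iterLog i n := by
  intro i
  induction i with
  | zero => intro _; simpa [iterLog] using hn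
  | succ i ih =>
    intro hik
    have hi : i ≤ k := Nat.le_of_succ_le hik
    have h := ih hi
    have heq : k + 1 - i = (k - i) + 1 := by omega
    have h2 : Tower ((k - i) + 1) ≤ iterLog i n := heq ▸ h
    have : Tower (k - i) ≤ Real.log (iterLog i n) := by
      have := Real.log_le_log (Real.exp_pos _) h2
      rwa [Real.log_exp] at this
    have heq2 : k + 1 - (i + 1) = k - i := by omega
    rw [heq2]
    exact this

lemma geo_sum (k : ℕ) :
    ∑ i ∈ Finset.range k, ((2:ℝ)⁻¹)^(k - i) = 1 - ((2:ℝ)⁻¹)^k := by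
  induction k with
  | zero => simp
  | succ k ih =>
    rw [Finset.sum_range_succ]
    have : ∀ i ∈ Finset.range k, ((2:ℝ)⁻¹)^(k + 1 - i) = (2:ℝ)⁻¹ * ((2:ℝ)⁻¹)^(k - i) := by
      intro i hi
      rw [Finset.mem_range] at hi
      rw [show k + 1 - i = (k - i) + 1 by omega, pow_succ]
      ring
    rw [Finset.sum_congr rfl this, ← Finset.mul_sum, ih]
    simp [pow_succ]
    ring

theorem stmt_6 (k : ℕ) (hk : 1 ≤ k) (n : ℝ) (hn : Tower (k + 1) ≤ n) :
    ∑ i ∈ Finset.range k, 1 / iterLog (i + 1) n < 1 := by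
  have hterm : ∀ i ∈ Finset.range k, 1 / iterLog (i + 1) n ≤ ((2:ℝ)⁻¹)^(k - i) := by
    intro i hi
    rw [Finset.mem_range] at hi
    have h1 : Tower (k - i) ≤ iterLog (i + 1) n := by
      have := iterLog_ge k n hn (i + 1) hi
      rwa [show k + 1 - (i + 1) = k - i by omega] at this
    have h2 : (2:ℝ)^(k - i) ≤ iterLog (i + 1) n :=
      le_trans (two_pow_le_Tower _) h1
    have hpos : (0:ℝ) < 2^(k - i) := pow_pos (by norm_num) _
    calc 1 / iterLog (i + 1) n ≤ 1 / (2:ℝ)^(k - i) :=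
          one_div_le_one_div_of_le hpos h2
      _ = ((2:ℝ)⁻¹)^(k - i) := by rw [one_div, inv_pow]
  calc ∑ i ∈ Finset.range k, 1 / iterLog (i + 1) n
      ≤ ∑ i ∈ Finset.range k, ((2:ℝ)⁻¹)^(k - i) := Finset.sum_le_sum hterm
    _ = 1 - ((2:ℝ)⁻¹)^k := geo_sum k
    _ < 1 := by
        have : (0:ℝ) < ((2:ℝ)⁻¹)^k := pow_pos (by norm_num) _
        linarith
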